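/- Let p ∈ (0,1) and let β : ℕ → ℝ be a function such that |β(n)| = O(√n) and |β(n)| → ∞ as n → ∞. Then for all sufficiently large n, the integer ⌊np⌋ − ⌊β(n)⌋ lies in [0, n] and B_n^{⌊np⌋}(p) ≤ exp( ⌊β(n)⌋² / (p(1−p)n) ) · B_n^{⌊np⌋ − ⌊β(n)⌋}(p). -/

import Mathlib

open Filter Finset Real Asymptotics

/-- The binomial probability mass function `B_n^i(p)`. -/
noncomputable def binPMF (p : ℝ) (n i : ℕ) : ℝ :=
  (n.choose i : ℝ) * p ^ i * (1 - p) ^ (n - i)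


lemma binPMF_pos (p : ℝ) (hp0 : 0 < p) (hp1 : p < 1) (n i : ℕ) (h : i ≤ n) :
    0 < binPMF p n i := by
  unfold binPMF
  have : 0 < (n.choose i : ℝ) := by exact_mod_cast Nat.choose_pos h
  have h1 : (0:ℝ) < 1 - p := by linarith
  positivity

lemma binPMF_succ (p : ℝ) (hp0 : 0 < p) (hp1 : p < 1) (n j : ℕ) (h : j + 1 ≤ n) :
    binPMF p n (j+1) = (((n:ℝ) - ((j:ℝ)+1) + 1) * p / (((j:ℝ)+1) * (1-p))) * binPMF p n j := by
  unfold binPMF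
  have hq : (0:ℝ) < 1 - p := by linarith
  have hc : ((n.choose (j+1) : ℝ)) * ((j:ℝ)+1) = (n.choose j : ℝ) * ((n:ℝ) - j) := by
    have h2 := Nat.choose_succ_right_eq n j
    have hcast : ((n - j : ℕ) : ℝ) = (n:ℝ) - j := by
      have : j ≤ n := by omega
      push_cast [this]; ring
    calc ((n.choose (j+1) : ℝ)) * ((j:ℝ)+1) = ((n.choose (j+1) * (j+1) : ℕ) : ℝ) := by push_cast; ring
      _ = ((n.choose j * (n - j) : ℕ) : ℝ) := by rw [h2]
      _ = (n.choose j : ℝ) * ((n:ℝ) - j) := by push_cast [hcast]; ring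
  have hpow : (1-p) ^ (n - j) = (1-p) ^ (n - (j+1)) * (1-p) := by
    rw [← pow_succ]; congr 1; omega
  rw [hpow]
  have hj1 : ((j:ℝ)+1) ≠ 0 := by positivity
  rw [eq_comm, div_mul_eq_mul_div, div_eq_iff (mul_ne_zero hj1 hq.ne')]
  linear_combination (-(p ^ (j+1) * (1-p) ^ (n-(j+1)) * (1-p))) * hc

lemma telescope (p : ℝ) (hp0 : 0 < p) (hp1 : p < 1) (n a b : ℕ) (hab : a ≤ b) (hbn : b ≤ n) :
    binPMF p n b =
      (∏ i ∈ Finset.Ioc a b, (((n:ℝ) - (i:ℝ) + 1) * p / ((i:ℝ) * (1-p)))) * binPMF p n a := by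
  induction b, hab using Nat.le_induction with
  | base => simp
  | succ b hab ih =>
    have hbn' : b ≤ n := by omega
    rw [Finset.prod_Ioc_succ_top hab, binPMF_succ p hp0 hp1 n b hbn, ih hbn']
    push_cast
    ring

lemma prod_le_exp (s : Finset ℕ) (g : ℕ → ℝ) (hg : ∀ i ∈ s, 0 ≤ g i) (E : ℝ)
    (h : ∑ i ∈ s, (g i - 1) ≤ E) : ∏ i ∈ s, g i ≤ Real.exp E := by
  calc ∏ i ∈ s, g i ≤ ∏ i ∈ s, Real.exp (g i - 1) :=
        Finset.prod_le_prod hg (fun i hi => by linarith [Real.add_one_le_exp (g i - 1)])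
    _ = Real.exp (∑ i ∈ s, (g i - 1)) := (Real.exp_sum s _).symm
    _ ≤ Real.exp E := Real.exp_le_exp.2 h

lemma sum_Ioc_id (a M : ℕ) (h : a ≤ M) :
    ∑ i ∈ Finset.Ioc a M, (i:ℝ) = ((M:ℝ)*((M:ℝ)+1) - (a:ℝ)*((a:ℝ)+1))/2 := by
  induction M, h using Nat.le_induction with
  | base => simp
  | succ M h ih => rw [Finset.sum_Ioc_succ_top h, ih]; push_cast; ring

set_option maxHeartbeats 1000000 in
lemma pos_case (p : ℝ) (hp0 : 0 < p) (hp1 : p < 1) (n M K : ℕ)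
    (hK7 : 7 ≤ K) (hM4K : 4*K ≤ M)
    (hMle : (M:ℝ) ≤ (n:ℝ)*p) (hMgt : (n:ℝ)*p < (M:ℝ)+1) (hMn : M ≤ n) :
    binPMF p n M ≤ Real.exp ((K:ℝ)^2/(p*(1-p)*(n:ℝ))) * binPMF p n (M-K) := by
  have hq : (0:ℝ) < 1 - p := by linarith
  have hKM : K ≤ M := by omega
  have har : ((M - K : ℕ) : ℝ) = (M:ℝ) - (K:ℝ) := by push_cast [hKM]; ring
  have hK7r : (7:ℝ) ≤ K := by exact_mod_cast hK7
  have hM4Kr : 4*(K:ℝ) ≤ M := by exact_mod_cast hM4K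
  have hn0 : (0:ℝ) < n := by nlinarith
  have hD : (0:ℝ) < ((M:ℝ) - K + 1) * (1-p) := by nlinarith
  set E := (K:ℝ)^2/(p*(1-p)*(n:ℝ)) with hE
  -- bound on each ratio term
  have hterm : ∀ i ∈ Finset.Ioc (M-K) M,
      ((n:ℝ) - (i:ℝ) + 1) * p / ((i:ℝ) * (1-p)) - 1 ≤
        ((M:ℝ) + 2 - i) / (((M:ℝ) - K + 1) * (1-p)) := by
    intro i hi
    rw [Finset.mem_Ioc] at hi
    have hir : (M:ℝ) - K + 1 ≤ (i:ℝ) := by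
      have : M - K + 1 ≤ i := hi.1
      have := (Nat.cast_le (α := ℝ)).2 this
      push_cast [hKM] at this; linarith
    have hiM : (i:ℝ) ≤ M := by exact_mod_cast hi.2
    have hi0 : (0:ℝ) < i := by nlinarith
    have hiq : (0:ℝ) < (i:ℝ) * (1-p) := by positivity
    rw [div_sub_one (ne_of_gt hiq)]
    have hnum : ((n:ℝ) - i + 1) * p - (i:ℝ) * (1-p) = (n:ℝ)*p + p - i := by ring
    rw [hnum]
    exact div_le_div₀ (by nlinarith) (by nlinarith) hD (by nlinarith)
  have hcard : (Finset.Ioc (M-K) M).card = K := by rw [Nat.card_Ioc]; omega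
  have hsum2 : ∑ i ∈ Finset.Ioc (M-K) M, (((M:ℝ) + 2 - i) / (((M:ℝ) - K + 1) * (1-p)))
      = (((K:ℝ)^2 + 3*K)/2) / (((M:ℝ) - K + 1) * (1-p)) := by
    rw [← Finset.sum_div]
    congr 1
    rw [Finset.sum_sub_distrib, Finset.sum_const, hcard, sum_Ioc_id (M-K) M (by omega), har]
    push_cast
    ring
  have hsumE : ∑ i ∈ Finset.Ioc (M-K) M,
      (((n:ℝ) - (i:ℝ) + 1) * p / ((i:ℝ) * (1-p)) - 1) ≤ E := by
    refine le_trans (Finset.sum_le_sum hterm) ?_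
    rw [hsum2, hE]
    rw [div_le_div_iff₀ hD (by positivity)]
    have hpoly : (((K:ℝ)^2 + 3*K)/2) * ((n:ℝ)*p) ≤ (K:ℝ)^2 * ((M:ℝ) - K + 1) := by
      have hKnn : (0:ℝ) ≤ (K:ℝ) := by linarith
      have hbr : 0 ≤ ((K:ℝ)-3)*(M:ℝ) - 2*(K:ℝ)^2 + (K:ℝ) - 3 := by
        nlinarith [mul_nonneg (by linarith : (0:ℝ) ≤ (K:ℝ)-3) (by linarith : (0:ℝ) ≤ (M:ℝ)-4*(K:ℝ)),
          sq_nonneg ((K:ℝ)-7)]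
      have hstep2 : ((K:ℝ)^2+3*K)*((M:ℝ)+1) ≤ 2*(K:ℝ)^2*((M:ℝ)-K+1) := by
        nlinarith [mul_nonneg hKnn hbr]
      have hstep1 : (((K:ℝ)^2+3*K)/2)*((n:ℝ)*p) ≤ (((K:ℝ)^2+3*K)/2)*((M:ℝ)+1) :=
        mul_le_mul_of_nonneg_left hMgt.le (by nlinarith)
      linarith
    calc (((K:ℝ)^2 + 3*K)/2) * (p*(1-p)*n) = ((((K:ℝ)^2 + 3*K)/2) * ((n:ℝ)*p)) * (1-p) := by ring
      _ ≤ ((K:ℝ)^2 * ((M:ℝ) - K + 1)) * (1-p) := mul_le_mul_of_nonneg_right hpoly hq.le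
      _ = (K:ℝ)^2 * (((M:ℝ) - K + 1) * (1-p)) := by ring
  have hg : ∀ i ∈ Finset.Ioc (M-K) M, 0 ≤ ((n:ℝ) - (i:ℝ) + 1) * p / ((i:ℝ) * (1-p)) := by
    intro i hi
    rw [Finset.mem_Ioc] at hi
    have hiM : (i:ℝ) ≤ M := by exact_mod_cast hi.2
    have hin : (i:ℝ) ≤ n := by exact_mod_cast le_trans hi.2 hMn
    have hi0 : (0:ℝ) ≤ i := by positivity
    have : (0:ℝ) ≤ (n:ℝ) - i + 1 := by linarith
    positivity
  have hprod := prod_le_exp _ _ hg E hsumE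
  rw [telescope p hp0 hp1 n (M-K) M (Nat.sub_le M K) hMn]
  have hP := binPMF_pos p hp0 hp1 n (M-K) (by omega)
  exact mul_le_mul_of_nonneg_right hprod hP.le

set_option maxHeartbeats 1000000 in
lemma neg_case (p : ℝ) (hp0 : 0 < p) (hp1 : p < 1) (n M L : ℕ)
    (hL7 : 7 ≤ L) (h4L : 4*(L:ℝ) ≤ (n:ℝ)*(1-p))
    (hMle : (M:ℝ) ≤ (n:ℝ)*p) (hMLn : M + L ≤ n) :
    binPMF p n M ≤ Real.exp ((L:ℝ)^2/(p*(1-p)*(n:ℝ))) * binPMF p n (M+L) := by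
  have hq : (0:ℝ) < 1 - p := by linarith
  have hL7r : (7:ℝ) ≤ L := by exact_mod_cast hL7
  have hMr : (0:ℝ) ≤ M := by positivity
  have hn0 : (0:ℝ) < n := by nlinarith
  have hMLr : ((M:ℝ) + L) ≤ n := by exact_mod_cast hMLn
  -- nq ≤ n - M
  have hnq : (n:ℝ)*(1-p) ≤ (n:ℝ) - M := by nlinarith
  have hDn : (0:ℝ) < ((n:ℝ) - M - L + 1) * p := by
    have : (0:ℝ) < (n:ℝ) - M - L + 1 := by nlinarith
    positivity
  set E := (L:ℝ)^2/(p*(1-p)*(n:ℝ)) with hE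
  set S : ℕ → ℝ := fun i => (i:ℝ) * (1-p) / (((n:ℝ) - (i:ℝ) + 1) * p) with hS
  have hRpos : ∀ i ∈ Finset.Ioc M (M+L), 0 < ((n:ℝ) - (i:ℝ) + 1) * p / ((i:ℝ) * (1-p)) := by
    intro i hi
    rw [Finset.mem_Ioc] at hi
    have hin : (i:ℝ) ≤ n := by exact_mod_cast le_trans hi.2 hMLn
    have hi0 : (0:ℝ) < i := by
      have : 1 ≤ i := by omega
      exact_mod_cast Nat.lt_of_lt_of_le Nat.zero_lt_one this |>.le.lt_of_ne (by exact_mod_cast (by omega : (0:ℕ) ≠ i))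
    have h1 : (0:ℝ) < (n:ℝ) - i + 1 := by linarith
    positivity
  have hterm : ∀ i ∈ Finset.Ioc M (M+L), S i - 1 ≤ ((i:ℝ) - M) / (((n:ℝ) - M - L + 1) * p) := by
    intro i hi
    rw [Finset.mem_Ioc] at hi
    have hiM : (M:ℝ) + 1 ≤ (i:ℝ) := by exact_mod_cast hi.1
    have hiML : (i:ℝ) ≤ (M:ℝ) + L := by exact_mod_cast hi.2
    have h1 : (0:ℝ) < (n:ℝ) - i + 1 := by nlinarith
    have hiq : (0:ℝ) < ((n:ℝ) - (i:ℝ) + 1) * p := by positivity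
    rw [hS]
    simp only
    rw [div_sub_one (ne_of_gt hiq)]
    have hnum : (i:ℝ) * (1-p) - ((n:ℝ) - i + 1) * p = (i:ℝ) - (n:ℝ)*p - p := by ring
    rw [hnum]
    exact div_le_div₀ (by nlinarith) (by nlinarith) hDn (by nlinarith)
  have hcard : (Finset.Ioc M (M+L)).card = L := by rw [Nat.card_Ioc]; omega
  have hsum2 : ∑ i ∈ Finset.Ioc M (M+L), (((i:ℝ) - M) / (((n:ℝ) - M - L + 1) * p))
      = (((L:ℝ)^2 + L)/2) / (((n:ℝ) - M - L + 1) * p) := by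
    rw [← Finset.sum_div]
    congr 1
    rw [Finset.sum_sub_distrib, Finset.sum_const, hcard, sum_Ioc_id M (M+L) (by omega)]
    push_cast
    ring
  have hsumE : ∑ i ∈ Finset.Ioc M (M+L), (S i - 1) ≤ E := by
    refine le_trans (Finset.sum_le_sum hterm) ?_
    rw [hsum2, hE]
    rw [div_le_div_iff₀ hDn (by positivity)]
    have hLnn : (0:ℝ) ≤ (L:ℝ) := by linarith
    have hpoly : (((L:ℝ)^2 + L)/2) * ((n:ℝ)*(1-p)) ≤ (L:ℝ)^2 * ((n:ℝ) - M - L + 1) := by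
      have hbr : 0 ≤ ((L:ℝ)-1)*((n:ℝ)*(1-p)) - 2*(L:ℝ)^2 + 2*(L:ℝ) := by
        nlinarith [mul_nonneg (by linarith : (0:ℝ) ≤ (L:ℝ)-1) (by linarith : (0:ℝ) ≤ (n:ℝ)*(1-p) - 4*(L:ℝ))]
      have hstep2 : ((L:ℝ)^2+L)*((n:ℝ)*(1-p)) ≤ 2*(L:ℝ)^2*((n:ℝ)*(1-p) - L + 1) := by
        nlinarith [mul_nonneg hLnn hbr]
      have hmono : 2*(L:ℝ)^2*((n:ℝ)*(1-p) - L + 1) ≤ 2*(L:ℝ)^2*((n:ℝ) - M - L + 1) := by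
        have : (0:ℝ) ≤ 2*(L:ℝ)^2 := by positivity
        nlinarith [mul_le_mul_of_nonneg_left hnq this]
      linarith
    calc (((L:ℝ)^2 + L)/2) * (p*(1-p)*n) = ((((L:ℝ)^2 + L)/2) * ((n:ℝ)*(1-p))) * p := by ring
      _ ≤ ((L:ℝ)^2 * ((n:ℝ) - M - L + 1)) * p := mul_le_mul_of_nonneg_right hpoly hp0.le
      _ = (L:ℝ)^2 * (((n:ℝ) - M - L + 1) * p) := by ring
  have hg : ∀ i ∈ Finset.Ioc M (M+L), 0 ≤ S i := by
    intro i hi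
    exact le_of_lt (by
      have := hRpos i hi
      rw [hS]; simp only
      have h2 : (0:ℝ) < (i:ℝ) * (1-p) := by
        rw [Finset.mem_Ioc] at hi
        have : (0:ℝ) < (i:ℝ) := by
          have h1 : 1 ≤ i := by omega
          exact_mod_cast Nat.pos_of_ne_zero (by omega)
        positivity
      have h3 : (0:ℝ) < ((n:ℝ) - (i:ℝ) + 1) * p := by
        rw [Finset.mem_Ioc] at hi
        have hin : (i:ℝ) ≤ n := by exact_mod_cast le_trans hi.2 hMLn
        have : (0:ℝ) < (n:ℝ) - i + 1 := by linarith
        positivity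
      positivity)
  have hprodS := prod_le_exp _ _ hg E hsumE
  have hSR : ∀ i ∈ Finset.Ioc M (M+L),
      S i * (((n:ℝ) - (i:ℝ) + 1) * p / ((i:ℝ) * (1-p))) = 1 := by
    intro i hi
    have hR := hRpos i hi
    have h2 : ((i:ℝ) * (1-p)) ≠ 0 := by
      rw [Finset.mem_Ioc] at hi
      have : (0:ℝ) < (i:ℝ) := by exact_mod_cast Nat.pos_of_ne_zero (by omega)
      positivity
    have h3 : (((n:ℝ) - (i:ℝ) + 1) * p) ≠ 0 := by
      rw [Finset.mem_Ioc] at hi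
      have hin : (i:ℝ) ≤ n := by exact_mod_cast le_trans hi.2 hMLn
      have : (0:ℝ) < (n:ℝ) - i + 1 := by linarith
      positivity
    rw [hS]
    field_simp
    exact div_self (mul_ne_zero (left_ne_zero_of_mul h2) (left_ne_zero_of_mul h3))
  have hone : (∏ i ∈ Finset.Ioc M (M+L), S i) *
      (∏ i ∈ Finset.Ioc M (M+L), (((n:ℝ) - (i:ℝ) + 1) * p / ((i:ℝ) * (1-p)))) = 1 := by
    rw [← Finset.prod_mul_distrib]
    exact Finset.prod_eq_one hSR
  have htel := telescope p hp0 hp1 n M (M+L) (Nat.le_add_right M L) hMLn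
  have hPM := binPMF_pos p hp0 hp1 n M (by omega)
  have hRprod_nn : 0 ≤ ∏ i ∈ Finset.Ioc M (M+L), (((n:ℝ) - (i:ℝ) + 1) * p / ((i:ℝ) * (1-p))) :=
    Finset.prod_nonneg (fun i hi => (hRpos i hi).le)
  calc binPMF p n M
      = ((∏ i ∈ Finset.Ioc M (M+L), S i) *
          (∏ i ∈ Finset.Ioc M (M+L), (((n:ℝ) - (i:ℝ) + 1) * p / ((i:ℝ) * (1-p))))) *
          binPMF p n M := by rw [hone, one_mul]
    _ = (∏ i ∈ Finset.Ioc M (M+L), S i) *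
          ((∏ i ∈ Finset.Ioc M (M+L), (((n:ℝ) - (i:ℝ) + 1) * p / ((i:ℝ) * (1-p)))) *
            binPMF p n M) := by ring
    _ ≤ Real.exp E *
          ((∏ i ∈ Finset.Ioc M (M+L), (((n:ℝ) - (i:ℝ) + 1) * p / ((i:ℝ) * (1-p)))) *
            binPMF p n M) :=
        mul_le_mul_of_nonneg_right hprodS (mul_nonneg hRprod_nn hPM.le)
    _ = Real.exp E * binPMF p n (M+L) := by rw [← htel]

set_option maxHeartbeats 1000000 in
theorem binPMF_center_le_shifted (p : ℝ) (hp0 : 0 < p) (hp1 : p < 1)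
    (β : ℕ → ℝ)
    (hβO : (fun n : ℕ => |β n|) =O[atTop] (fun n : ℕ => Real.sqrt n))
    (hbeta_top : Tendsto (fun n => |β n|) atTop atTop) :
    ∀ᶠ n : ℕ in atTop,
      0 ≤ ⌊(n : ℝ) * p⌋ - ⌊β n⌋ ∧ ⌊(n : ℝ) * p⌋ - ⌊β n⌋ ≤ (n : ℤ) ∧
      binPMF p n (⌊(n : ℝ) * p⌋).toNat ≤
        Real.exp ((⌊β n⌋ : ℝ) ^ 2 / (p * (1 - p) * n)) *
          binPMF p n (⌊(n : ℝ) * p⌋ - ⌊β n⌋).toNat := by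
  have hq : (0:ℝ) < 1 - p := by linarith
  obtain ⟨C, hC, hOW⟩ := hβO.exists_pos
  have hCb : ∀ᶠ n : ℕ in atTop, |β n| ≤ C * Real.sqrt n := by
    filter_upwards [hOW.bound] with n hn
    simpa [Real.norm_eq_abs, abs_abs, abs_of_nonneg (Real.sqrt_nonneg _)] using hn
  have h8 : ∀ᶠ n : ℕ in atTop, (8:ℝ) ≤ |β n| := hbeta_top.eventually_ge_atTop 8
  set x := max ((8*C+8)/p) (max ((8*C+8)/(1-p)) 1) with hxdef
  have hx : ∀ᶠ n : ℕ in atTop, x ≤ Real.sqrt n := by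
    have h1 : ∀ᶠ n : ℕ in atTop, x^2 ≤ (n:ℝ) :=
      tendsto_natCast_atTop_atTop.eventually_ge_atTop (x^2)
    filter_upwards [h1] with n hn
    calc x ≤ |x| := le_abs_self x
      _ = Real.sqrt (x^2) := (Real.sqrt_sq_eq_abs x).symm
      _ ≤ Real.sqrt n := Real.sqrt_le_sqrt hn
  filter_upwards [hCb, h8, hx] with n hCn h8n hxn
  have hs : (0:ℝ) ≤ Real.sqrt n := Real.sqrt_nonneg _
  have h1s : (1:ℝ) ≤ Real.sqrt n :=
    le_trans (le_trans (le_max_right _ _) (le_max_right _ _)) hxn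
  have hss : Real.sqrt n * Real.sqrt n = (n:ℝ) := Real.mul_self_sqrt (by positivity)
  have hnp : (8*C+8) * Real.sqrt n ≤ (n:ℝ)*p := by
    have h1 : (8*C+8)/p ≤ Real.sqrt n := le_trans (le_max_left _ _) hxn
    have h2 : (8*C+8) ≤ Real.sqrt n * p := (div_le_iff₀ hp0).1 h1
    calc (8*C+8) * Real.sqrt n ≤ (Real.sqrt n * p) * Real.sqrt n :=
          mul_le_mul_of_nonneg_right h2 hs
      _ = (Real.sqrt n * Real.sqrt n) * p := by ring
      _ = (n:ℝ)*p := by rw [hss]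
  have hnq : (8*C+8) * Real.sqrt n ≤ (n:ℝ)*(1-p) := by
    have h1 : (8*C+8)/(1-p) ≤ Real.sqrt n :=
      le_trans (le_trans (le_max_left _ _) (le_max_right _ _)) hxn
    have h2 : (8*C+8) ≤ Real.sqrt n * (1-p) := (div_le_iff₀ hq).1 h1
    calc (8*C+8) * Real.sqrt n ≤ (Real.sqrt n * (1-p)) * Real.sqrt n :=
          mul_le_mul_of_nonneg_right h2 hs
      _ = (Real.sqrt n * Real.sqrt n) * (1-p) := by ring
      _ = (n:ℝ)*(1-p) := by rw [hss]
  have hn1 : (1:ℝ) ≤ n := by nlinarith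
  have hm0 : 0 ≤ ⌊(n:ℝ)*p⌋ := Int.floor_nonneg.2 (by positivity)
  set M := (⌊(n:ℝ)*p⌋).toNat with hM
  have hMZ : (M:ℤ) = ⌊(n:ℝ)*p⌋ := Int.toNat_of_nonneg hm0
  have hMr : (M:ℝ) = ((⌊(n:ℝ)*p⌋ : ℤ):ℝ) := by exact_mod_cast hMZ
  have hMle : (M:ℝ) ≤ (n:ℝ)*p := by rw [hMr]; exact Int.floor_le _
  have hMgt : (n:ℝ)*p < (M:ℝ)+1 := by rw [hMr]; exact Int.lt_floor_add_one _
  have hMn : M ≤ n := by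
    have : (M:ℝ) ≤ (n:ℝ) := le_trans hMle (by nlinarith)
    exact_mod_cast this
  rcases le_abs.1 h8n with hb | hb
  · -- β n ≥ 8 : positive shift
    have hk8 : (8:ℤ) ≤ ⌊β n⌋ := Int.le_floor.2 (by exact_mod_cast hb)
    set K := (⌊β n⌋).toNat with hK
    have hKZ : (K:ℤ) = ⌊β n⌋ := Int.toNat_of_nonneg (by omega)
    have hKr : (K:ℝ) = ((⌊β n⌋ : ℤ):ℝ) := by exact_mod_cast hKZ
    have hKC : (K:ℝ) ≤ C * Real.sqrt n := by
      rw [hKr]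
      exact le_trans (Int.floor_le _) (le_trans (le_abs_self _) hCn)
    have hM4K : 4*K ≤ M := by
      have h4 : 4*(K:ℝ) ≤ (M:ℝ) := by nlinarith
      exact_mod_cast h4
    refine ⟨by omega, by omega, ?_⟩
    have hsub : (⌊(n:ℝ)*p⌋ - ⌊β n⌋).toNat = M - K := by omega
    rw [hsub]
    have hexp : ((⌊β n⌋ : ℤ):ℝ)^2 = (K:ℝ)^2 := by rw [hKr]
    rw [hexp]
    exact pos_case p hp0 hp1 n M K (by omega) hM4K hMle hMgt hMn
  · -- β n ≤ -8 : negative shift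
    have hkneg : ⌊β n⌋ ≤ -8 := by
      have h1 : ((⌊β n⌋ : ℤ):ℝ) ≤ -8 := le_trans (Int.floor_le _) (by linarith)
      exact_mod_cast h1
    set L := (-⌊β n⌋).toNat with hL
    have hLZ : (L:ℤ) = -⌊β n⌋ := Int.toNat_of_nonneg (by omega)
    have hLr : (L:ℝ) = -((⌊β n⌋ : ℤ):ℝ) := by exact_mod_cast hLZ
    have hLC : (L:ℝ) ≤ C * Real.sqrt n + 1 := by
      rw [hLr]
      have h1 : β n - 1 < ((⌊β n⌋ : ℤ):ℝ) := Int.sub_one_lt_floor _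
      have h2 : -β n ≤ |β n| := neg_le_abs _
      linarith
    have h4L : 4*(L:ℝ) ≤ (n:ℝ)*(1-p) := by nlinarith
    have hMLn : M + L ≤ n := by
      have h1 : (M:ℝ) + (L:ℝ) ≤ (n:ℝ) := by nlinarith
      exact_mod_cast h1
    refine ⟨by omega, by omega, ?_⟩
    have hsub : (⌊(n:ℝ)*p⌋ - ⌊β n⌋).toNat = M + L := by omega
    rw [hsub]
    have hexp : ((⌊β n⌋ : ℤ):ℝ)^2 = (L:ℝ)^2 := by rw [hLr]; ring
    rw [hexp]
    exact neg_case p hp0 hp1 n M L (by omega) h4L hMle hMLn
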